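/- If m ≤ e, then any two lines L, L' of the linearized Wenger graph L_m(q) are at distance at most 2(m+1): there is a walk of length at most 2(m+1) between them. -/

import Mathlib

/-- In the linearized Wenger graph, point `P` is adjacent to line `L` iff
`l_k + p_k = p_1^{p^{k-2}} l_1` for `2 ≤ k ≤ m+1`. -/
def lwAdj (p : ℕ) {F : Type} [Field F] {m : ℕ} (P L : Fin (m + 1) → F) : Prop :=
  ∀ k : Fin m, L k.succ + P k.succ = P 0 ^ p ^ (k : ℕ) * L 0

/-- The linearized Wenger graph `L_m(q)` as a bipartite graph on points ⊕ lines. -/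
def lwGraph (p : ℕ) (F : Type) [Field F] (m : ℕ) :
    SimpleGraph ((Fin (m + 1) → F) ⊕ (Fin (m + 1) → F)) :=
  SimpleGraph.fromRel fun v w => match v, w with
    | Sum.inl P, Sum.inr L => lwAdj p P L
    | _, _ => False

def lwVec (p : ℕ) {F : Type} [Field F] (m : ℕ) (x : F) : Fin (m + 1) → F :=
  Fin.cons 1 (fun k => x ^ p ^ (k : ℕ))

lemma lwStep (p : ℕ) {F : Type} [Field F] (m : ℕ) (L : Fin (m+1) → F) (c x : F) :
    ∃ w : (lwGraph p F m).Walk (Sum.inr L) (Sum.inr (L + c • lwVec p m x)),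
      w.length = 2 := by
  set P : Fin (m+1) → F := Fin.cons x (fun k => x ^ p ^ (k : ℕ) * L 0 - L k.succ) with hP
  have h1 : lwAdj p P L := by
    intro k
    simp [hP, Fin.cons_succ, Fin.cons_zero]
  have h2 : lwAdj p P (L + c • lwVec p m x) := by
    intro k
    simp only [hP, Pi.add_apply, Pi.smul_apply, lwVec, Fin.cons_succ, Fin.cons_zero,
      smul_eq_mul]
    ring
  have e1 : (lwGraph p F m).Adj (Sum.inr L) (Sum.inl P) := by
    refine ⟨by simp, Or.inr h1⟩
  have e2 : (lwGraph p F m).Adj (Sum.inl P) (Sum.inr (L + c • lwVec p m x)) := by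
    refine ⟨by simp, Or.inl h2⟩
  exact ⟨SimpleGraph.Walk.cons e1 (SimpleGraph.Walk.cons e2 SimpleGraph.Walk.nil), rfl⟩

lemma lwWalkFinset (p : ℕ) {F : Type} [Field F] (m : ℕ) {α : Type} [DecidableEq α]
    (s : Finset α) (g y : α → F) (L : Fin (m+1) → F) :
    ∃ w : (lwGraph p F m).Walk (Sum.inr L)
        (Sum.inr (L + ∑ u ∈ s, g u • lwVec p m (y u))), w.length = 2 * s.card := by
  induction s using Finset.induction_on generalizing L with
  | empty => exact ⟨SimpleGraph.Walk.nil.copy rfl (by simp), by rw [SimpleGraph.Walk.length_copy]; simp⟩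
  | insert a s' ha ih =>
    obtain ⟨w1, hw1⟩ := lwStep p m L (g a) (y a)
    obtain ⟨w2, hw2⟩ := ih (L + g a • lwVec p m (y a))
    refine ⟨(w1.append w2).copy rfl (by rw [Finset.sum_insert ha, add_assoc]), ?_⟩
    rw [SimpleGraph.Walk.length_copy, SimpleGraph.Walk.length_append, hw1, hw2,
      Finset.card_insert_of_notMem ha]
    ring

open Polynomial in
lemma lwSpan (p e m : ℕ) [Fact p.Prime] (hm : 1 ≤ m) (hme : m ≤ e) :
    Submodule.span (GaloisField p e) (Set.range (lwVec p (F := GaloisField p e) m)) = ⊤ := by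
  classical
  set F := GaloisField p e with hF
  have hp2 : 2 ≤ p := (Fact.out : p.Prime).two_le
  have he : e ≠ 0 := by omega
  haveI : Fintype F := Fintype.ofFinite F
  have hcard : Fintype.card F = p ^ e := by
    rw [← Nat.card_eq_fintype_card]; exact GaloisField.card p e he
  by_contra h
  obtain ⟨f, hf0, hfmap⟩ := Submodule.exists_dual_map_eq_bot_of_lt_top
    (lt_top_iff_ne_top.mpr h) inferInstance
  have hfv : ∀ x : F, f (lwVec p m x) = 0 := by
    intro x
    have : f (lwVec p m x) ∈ Submodule.map f
        (Submodule.span F (Set.range (lwVec p (F := F) m))) :=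
      Submodule.mem_map_of_mem (Submodule.subset_span (Set.mem_range_self x))
    rwa [hfmap, Submodule.mem_bot] at this
  set a : Fin (m+1) → F := fun i => f (Pi.single i 1) with ha
  have hfy : ∀ y : Fin (m+1) → F, f y = ∑ i, y i * a i := by
    intro y
    conv_lhs => rw [pi_eq_sum_univ y, map_sum]
    refine Finset.sum_congr rfl fun i _ => ?_
    rw [map_smul, smul_eq_mul, ha]
    congr 1
    congr 1
    ext j
    simp [Pi.single_apply, eq_comm]
  set Q : F[X] := C (a 0) + ∑ k : Fin m, C (a k.succ) * X ^ (p ^ (k : ℕ)) with hQ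
  have heval : ∀ x : F, Q.eval x = 0 := by
    intro x
    have := hfv x
    rw [hfy] at this
    rw [Fin.sum_univ_succ] at this
    simp only [lwVec, Fin.cons_zero, Fin.cons_succ, one_mul] at this
    rw [hQ]
    simp only [eval_add, eval_C, eval_finset_sum, eval_mul, eval_pow, eval_X]
    rw [← this]
    congr 1
    exact Finset.sum_congr rfl fun k _ => mul_comm _ _
  have hdeg : Q.natDegree < Fintype.card F := by
    rw [hcard]
    have h1 : Q.natDegree ≤ p ^ (e - 1) := by
      refine (natDegree_add_le _ _).trans (max_le ?_ ?_)
      · simp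
      · refine natDegree_sum_le_of_forall_le _ _ fun k _ => ?_
        refine (natDegree_C_mul_X_pow_le _ _).trans ?_
        exact Nat.pow_le_pow_right (by omega) (by omega)
    exact h1.trans_lt (Nat.pow_lt_pow_right (by omega) (by omega))
  have hQ0 : Q = 0 :=
    Polynomial.eq_zero_of_natDegree_lt_card_of_eval_eq_zero Q Function.injective_id
      (fun x => heval x) hdeg
  have ha0 : ∀ i, a i = 0 := by
    have hc : ∀ n, Q.coeff n = 0 := by intro n; rw [hQ0]; simp
    intro i
    refine Fin.cases ?_ (fun j => ?_) i
    · have := hc 0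
      rw [hQ] at this
      simp only [coeff_add, coeff_C_zero, finset_sum_coeff, coeff_C_mul, coeff_X_pow] at this
      rw [Finset.sum_eq_zero (fun k _ => ?_)] at this
      · simpa using this
      · have : (0 : ℕ) ≠ p ^ (k : ℕ) := by positivity
        simp [this]
    · have := hc (p ^ (j : ℕ))
      rw [hQ] at this
      simp only [coeff_add, finset_sum_coeff, coeff_C_mul, coeff_X_pow] at this
      have hC : (C (a 0)).coeff (p ^ (j : ℕ)) = 0 := by
        rw [coeff_C, if_neg]; positivity
      rw [hC, zero_add] at this
      have hinj : ∀ k : Fin m, (p ^ (j : ℕ) = p ^ (k : ℕ)) ↔ j = k := fun k =>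
        ⟨fun hpk => Fin.val_injective (Nat.pow_right_injective hp2 hpk),
         fun hjk => by rw [hjk]⟩
      simp only [mul_ite, mul_one, mul_zero] at this
      rw [Finset.sum_congr rfl fun k _ => if_congr (hinj k) rfl rfl] at this
      rwa [Finset.sum_ite_eq, if_pos (Finset.mem_univ j)] at this
  refine hf0 (LinearMap.ext fun y => ?_)
  rw [hfy]
  simp [ha0]


/-- If `m ≤ e`, any two lines of `L_m(q)` are joined by a walk of length at most
`2(m+1)`. -/
theorem stmt17 (p e m : ℕ) [Fact p.Prime] (hm : 1 ≤ m) (hme : m ≤ e)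
    (L L' : Fin (m + 1) → GaloisField p e) :
    ∃ w : (lwGraph p (GaloisField p e) m).Walk (Sum.inr L) (Sum.inr L'),
      w.length ≤ 2 * (m + 1) := by
  classical
  obtain ⟨t, hts, htspan, htli⟩ :=
    exists_linearIndependent (GaloisField p e) (Set.range (lwVec p (F := GaloisField p e) m))
  rw [lwSpan p e m hm hme] at htspan
  have hD : L' - L ∈ Submodule.span (GaloisField p e) t := by rw [htspan]; trivial
  obtain ⟨c, hsupp, hsum⟩ := Submodule.mem_span_set.mp hD
  have hy : ∀ u ∈ c.support, ∃ x : GaloisField p e, lwVec p m x = u := fun u hu => hts (hsupp hu)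
  choose! y hy using hy
  obtain ⟨w, hw⟩ := lwWalkFinset p m c.support (fun u => c u) y L
  have hend : L + ∑ u ∈ c.support, c u • lwVec p m (y u) = L' := by
    rw [Finset.sum_congr rfl (fun u hu => by rw [hy u hu])]
    have : (∑ u ∈ c.support, c u • u) = c.sum fun mi r => r • mi := by
      rw [Finsupp.sum]
    rw [this, hsum, add_sub_cancel]
  refine ⟨w.copy rfl (by rw [hend]), ?_⟩
  rw [SimpleGraph.Walk.length_copy, hw]
  have hcard : c.support.card ≤ m + 1 := by
    have hfin : t.Finite := htli.setFinite
    have hsub : (c.support : Set _) ⊆ t := hsupp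
    have h1 : c.support.card ≤ hfin.toFinset.card := by
      apply Finset.card_le_card
      intro u hu
      rw [Set.Finite.mem_toFinset]
      exact hsub hu
    have h2 : hfin.toFinset.card ≤ Module.finrank (GaloisField p e) (Fin (m+1) → GaloisField p e) := by
      classical
      have := htli
      rw [← Set.Finite.coe_toFinset hfin] at this
      simpa using this.fintype_card_le_finrank
    rw [Module.finrank_pi, Fintype.card_fin] at h2
    omega
  omega
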